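/- Let ω₀ > 0, m_D > 0, m_C > 0, k > 0 be reals with k ≥ 3ω₀²·m_D, let N be a positive integer, set m_r = m_C·m_D/(N·m_D + m_C), and let A₁ be the real 4×4 matrix with rows (0, 1, 0, 0), (−3ω₀²·m_r/m_D, 0, 0, 2ω₀), (0, 0, 0, 1), (0, −2ω₀, 3ω₀² − k/m_D, 0) (i.e., the case of zero damping b = 0). Then every complex eigenvalue ρ of A₁ is purely imaginary: Re ρ = 0. -/

import Mathlib

open Matrix Polynomial

lemma quartic_aux (B C : ℝ) (hB : 0 < B) (hC : 0 ≤ C) (hD : 4 * C ≤ B ^ 2)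
    (ρ : ℂ) (h : ρ ^ 4 + (B : ℂ) * ρ ^ 2 + (C : ℂ) = 0) : ρ.re = 0 := by
  set d : ℝ := B ^ 2 / 4 - C with hd
  have hd0 : 0 ≤ d := by simp [hd]; linarith
  have key : (ρ ^ 2 + (B : ℂ) / 2) ^ 2 = (d : ℂ) := by
    rw [hd]
    push_cast
    linear_combination h
  have hsq : ((Real.sqrt d : ℂ)) ^ 2 = (d : ℂ) := by
    norm_cast
    exact Real.sq_sqrt hd0
  have hfac : (ρ ^ 2 + (B : ℂ) / 2 - Real.sqrt d) * (ρ ^ 2 + (B : ℂ) / 2 + Real.sqrt d) = 0 := by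
    linear_combination key - hsq
  have hsle : Real.sqrt d ≤ B / 2 := by
    have : d ≤ (B / 2) ^ 2 := by nlinarith
    calc Real.sqrt d ≤ Real.sqrt ((B/2)^2) := Real.sqrt_le_sqrt this
      _ = B / 2 := by rw [Real.sqrt_sq (by linarith)]
  -- ρ^2 is a real number ≤ 0
  have hρ2 : ∃ t : ℝ, t ≤ 0 ∧ ρ ^ 2 = (t : ℂ) := by
    rcases mul_eq_zero.mp hfac with h1 | h1
    · refine ⟨Real.sqrt d - B / 2, by linarith, ?_⟩
      push_cast
      linear_combination h1
    · refine ⟨-Real.sqrt d - B / 2, by have := Real.sqrt_nonneg d; linarith, ?_⟩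
      push_cast
      linear_combination h1
  obtain ⟨t, ht0, ht⟩ := hρ2
  have him : ρ.re * ρ.im + ρ.im * ρ.re = 0 := by
    have := congrArg Complex.im ht
    simpa [pow_two, Complex.mul_im] using this
  have hre : ρ.re * ρ.re - ρ.im * ρ.im ≤ 0 := by
    have := congrArg Complex.re ht
    simp [pow_two, Complex.mul_re] at this
    linarith
  rcases mul_eq_zero.mp (by linarith : ρ.re * ρ.im = 0) with h | h
  · exact h
  · nlinarith

/-- In the undamped case `b = 0`, if `k ≥ 3ω₀²·m_D`, then every complex
eigenvalue (root of the characteristic polynomial) of the matrix `A₁` of the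
linearized in-plane relative motion between deputy satellites is purely
imaginary. -/
theorem deputy_relative_motion_undamped_imaginary (ω₀ mD mC k : ℝ) (N : ℕ)
    (hω₀ : 0 < ω₀) (hmD : 0 < mD) (hmC : 0 < mC) (hk : 0 < k)
    (hstab : 3 * ω₀ ^ 2 * mD ≤ k)
    (hN : 0 < N) (mr : ℝ) (hmr : mr = mC * mD / ((N : ℝ) * mD + mC)) :
    ∀ ρ : ℂ,
      (Polynomial.aeval ρ)
        (Matrix.charpoly
          (!![0, 1, 0, 0;
              -3 * ω₀ ^ 2 * mr / mD, 0, 0, 2 * ω₀;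
              0, 0, 0, 1;
              0, -2 * ω₀, 3 * ω₀ ^ 2 - k / mD, 0] :
            Matrix (Fin 4) (Fin 4) ℝ)) = 0 → ρ.re = 0 := by
  intro ρ hρ
  set a : ℝ := 3 * ω₀ ^ 2 * mr / mD with ha
  set c : ℝ := k / mD - 3 * ω₀ ^ 2 with hc
  have ha0 : 0 < a := by
    have hmr0 : 0 < mr := by
      rw [hmr]
      positivity
    rw [ha]; positivity
  have hc0 : 0 ≤ c := by
    rw [hc]
    rw [sub_nonneg, le_div_iff₀ hmD]
    linarith
  have hM : Matrix.charpoly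
          (!![0, 1, 0, 0;
              -3 * ω₀ ^ 2 * mr / mD, 0, 0, 2 * ω₀;
              0, 0, 0, 1;
              0, -2 * ω₀, 3 * ω₀ ^ 2 - k / mD, 0] :
            Matrix (Fin 4) (Fin 4) ℝ)
      = X ^ 4 + Polynomial.C (a + c + 4 * ω₀ ^ 2) * X ^ 2 + Polynomial.C (a * c) := by
    simp [Matrix.charpoly, charmatrix, Matrix.det_succ_row_zero, Fin.sum_univ_succ, ha, hc,
      Matrix.diagonal_apply, show Fin.succAbove (1 : Fin 4) 2 = 3 from rfl]
    ring_nf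
    simp only [map_neg]
    rw [show ((C 2 : ℝ[X]) ^ 2 = C 4) by rw [← C_pow]; norm_num]
    ring
  rw [hM] at hρ
  simp only [map_add, _root_.map_mul, map_pow, aeval_X, aeval_C, Algebra.algebraMap_self,
    Complex.coe_algebraMap] at hρ
  apply quartic_aux (a + c + 4 * ω₀ ^ 2) (a * c)
  · positivity
  · positivity
  · nlinarith [sq_nonneg (a - c), mul_nonneg ha0.le hc0, mul_nonneg (mul_nonneg ha0.le (sq_nonneg ω₀)) (by norm_num : (0:ℝ) ≤ 8), sq_nonneg (ω₀ ^ 2), mul_nonneg hc0 (sq_nonneg ω₀)]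
  · push_cast
    convert hρ using 2 <;> push_cast <;> ring
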